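/- The limit as x → -∞ of the tail conditional variance Var[X | X < x] of a standard normal random variable X equals 0, and Var[X | X < 0] = 1 - 2/π. -/

import Mathlib

open MeasureTheory Real Filter

/-- Standard normal density. -/
noncomputable def stdPdf (x : ℝ) : ℝ := (Real.sqrt (2 * Real.pi))⁻¹ * Real.exp (-x ^ 2 / 2)

/-- Standard normal distribution function. -/
noncomputable def stdCdf (x : ℝ) : ℝ := ∫ t in Set.Iic x, stdPdf t

lemma stdPdf_pos (x : ℝ) : 0 < stdPdf x := by
  unfold stdPdf
  positivity

lemma integrable_stdPdf : Integrable stdPdf := by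
  have h : stdPdf = fun x => (Real.sqrt (2 * Real.pi))⁻¹ * Real.exp (-(1/2 : ℝ) * x ^ 2) := by
    funext x; unfold stdPdf; ring_nf
  rw [h]
  exact (integrable_exp_neg_mul_sq (by norm_num)).const_mul _

lemma measurable_stdPdf : Measurable stdPdf := by
  unfold stdPdf
  fun_prop

lemma hasDerivAt_stdPdf (t : ℝ) : HasDerivAt stdPdf (-t * stdPdf t) t := by
  unfold stdPdf
  have h1 : HasDerivAt (fun x : ℝ => -x ^ 2 / 2) (-t) t := by
    have := ((hasDerivAt_pow 2 t).neg).div_const 2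
    exact this.congr_deriv (by norm_num; ring)
  have h2 := (h1.exp).const_mul (Real.sqrt (2 * Real.pi))⁻¹
  exact h2.congr_deriv (by ring)

lemma tendsto_stdPdf_atBot : Tendsto stdPdf atBot (nhds 0) := by
  have h1 : Tendsto (fun x : ℝ => -x ^ 2 / 2) atBot atBot := by
    apply tendsto_atBot_mono' atBot ?_ tendsto_id
    filter_upwards [eventually_le_atBot (-2 : ℝ)] with x hx
    show -x ^ 2 / 2 ≤ x
    nlinarith
  have := (Real.tendsto_exp_atBot).comp h1
  have h2 : Tendsto (fun x : ℝ => (Real.sqrt (2 * Real.pi))⁻¹ * Real.exp (-x ^ 2 / 2)) atBot (nhds ((Real.sqrt (2 * Real.pi))⁻¹ * 0)) := this.const_mul _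
  unfold stdPdf
  simpa using h2

lemma integrableOn_pdf_div_pow {x : ℝ} (hx : x < 0) (n : ℕ) :
    IntegrableOn (fun t => stdPdf t / t ^ n) (Set.Iic x) := by
  apply Integrable.mono' (g := fun t => stdPdf t / |x| ^ n)
  · exact (integrable_stdPdf.restrict).div_const _
  · exact ((measurable_stdPdf.div (measurable_id.pow_const n)).aestronglyMeasurable)
  · rw [ae_restrict_iff' measurableSet_Iic]
    filter_upwards with t ht
    have ht' : t ≤ x := ht
    have h1 : |x| ^ n ≤ |t| ^ n := by
      apply pow_le_pow_left₀ (abs_nonneg x)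
      rw [abs_of_neg hx, abs_of_neg (lt_of_le_of_lt ht' hx)]
      linarith
    have hxn : (0:ℝ) < |x| ^ n := pow_pos (abs_pos.mpr hx.ne) n
    rw [Real.norm_eq_abs, abs_div, abs_of_pos (stdPdf_pos t), abs_pow]
    exact div_le_div_of_nonneg_left (stdPdf_pos t).le hxn h1

lemma stdCdf_pos (x : ℝ) : 0 < stdCdf x := by
  unfold stdCdf
  rw [setIntegral_pos_iff_support_of_nonneg_ae]
  · have : Function.support stdPdf = Set.univ := by
      ext t; simp [Function.support, (stdPdf_pos t).ne']
    rw [this]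
    simpa using (by simp : (volume (Set.Iic x)) = ⊤) ▸ (by norm_num : (0:ENNReal) < ⊤)
  · filter_upwards with t using (stdPdf_pos t).le
  · exact integrable_stdPdf.restrict

lemma tendsto_inv_atBot' : Tendsto (fun t : ℝ => t⁻¹) atBot (nhds 0) := by
  have h3 : Tendsto (fun t : ℝ => -t) atBot atTop := tendsto_neg_atBot_atTop
  have h5 := h3.inv_tendsto_atTop.neg
  simp only [Pi.inv_apply, Pi.neg_apply, neg_zero] at h5
  refine h5.congr (fun t => ?_)
  rw [inv_neg, neg_neg]

lemma tendsto_inv_cube_atBot : Tendsto (fun t : ℝ => (t ^ 3)⁻¹) atBot (nhds 0) := by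
  have h1 : Tendsto (fun t : ℝ => t ^ 3) atBot atBot := by
    apply tendsto_atBot_mono' atBot ?_ tendsto_id
    filter_upwards [eventually_le_atBot (-1 : ℝ)] with t ht
    show t ^ 3 ≤ t
    nlinarith [sq_nonneg t, sq_nonneg (t + 1), sq_nonneg (t - 1)]
  have h3 : Tendsto (fun t : ℝ => -(t ^ 3)) atBot atTop := tendsto_neg_atBot_atTop.comp h1
  have h5 := h3.inv_tendsto_atTop.neg
  simp only [Pi.inv_apply, Pi.neg_apply, neg_zero] at h5
  refine h5.congr (fun t => ?_)
  simp [Function.comp_def, inv_neg]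

lemma cdf_id1 {x : ℝ} (hx : x < 0) :
    stdCdf x + (∫ t in Set.Iic x, stdPdf t / t ^ 2) = -(stdPdf x / x) := by
  have key : (∫ t in Set.Iic x, (stdPdf t + stdPdf t / t ^ 2)) = -(stdPdf x / x) - 0 := by
    apply integral_Iic_of_hasDerivAt_of_tendsto' (f := fun t => -(stdPdf t * t⁻¹))
    · intro t ht
      have ht0 : t ≠ 0 := (lt_of_le_of_lt ht hx).ne
      have h := (((hasDerivAt_stdPdf t).mul (hasDerivAt_inv ht0)).neg)
      refine h.congr_deriv ?_
      field_simp
      ring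
    · exact (integrable_stdPdf.restrict).add (integrableOn_pdf_div_pow hx 2)
    · have := (tendsto_stdPdf_atBot.mul tendsto_inv_atBot').neg
      simpa using this
  rw [integral_add (integrable_stdPdf.restrict) (integrableOn_pdf_div_pow hx 2)] at key
  unfold stdCdf
  linarith [key]

lemma cdf_id2 {x : ℝ} (hx : x < 0) :
    (∫ t in Set.Iic x, stdPdf t / t ^ 2) + 3 * (∫ t in Set.Iic x, stdPdf t / t ^ 4)
      = -(stdPdf x / x ^ 3) := by
  have key : (∫ t in Set.Iic x, (stdPdf t / t ^ 2 + 3 * (stdPdf t / t ^ 4)))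
      = -(stdPdf x * (x ^ 3)⁻¹) - 0 := by
    apply integral_Iic_of_hasDerivAt_of_tendsto' (f := fun t => -(stdPdf t * (t ^ 3)⁻¹))
    · intro t ht
      have ht0 : t ≠ 0 := (lt_of_le_of_lt ht hx).ne
      have hpow : HasDerivAt (fun s : ℝ => s ^ 3) (3 * t ^ 2) t := by
        simpa using hasDerivAt_pow 3 t
      have h := (((hasDerivAt_stdPdf t).mul (hpow.inv (pow_ne_zero 3 ht0))).neg)
      refine h.congr_deriv ?_
      simp only [Pi.inv_apply]
      field_simp
      ring
    · exact (integrableOn_pdf_div_pow hx 2).add ((integrableOn_pdf_div_pow hx 4).const_mul 3)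
    · have := (tendsto_stdPdf_atBot.mul tendsto_inv_cube_atBot).neg
      simpa using this
  rw [integral_add (integrableOn_pdf_div_pow hx 2) ((integrableOn_pdf_div_pow hx 4).const_mul 3),
    integral_const_mul] at key
  rw [div_eq_mul_inv]
  linarith [key]

lemma R_nonneg (x : ℝ) (n : ℕ) (hn : Even n) : 0 ≤ ∫ t in Set.Iic x, stdPdf t / t ^ n := by
  apply setIntegral_nonneg measurableSet_Iic
  intro t _
  exact div_nonneg (stdPdf_pos t).le (hn.pow_nonneg t)

lemma R_le {x : ℝ} (hx : x < 0) (n : ℕ) (hpos : 0 < x ^ n)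
    (hpt : ∀ t ≤ x, x ^ n ≤ t ^ n) :
    (∫ t in Set.Iic x, stdPdf t / t ^ n) * x ^ n ≤ stdCdf x := by
  have hmono : (∫ t in Set.Iic x, stdPdf t / t ^ n) ≤ ∫ t in Set.Iic x, stdPdf t / x ^ n := by
    apply setIntegral_mono_on (integrableOn_pdf_div_pow hx n)
      ((integrable_stdPdf.restrict).div_const _) measurableSet_Iic
    intro t ht
    exact div_le_div_of_nonneg_left (stdPdf_pos t).le hpos (hpt t ht)
  rw [integral_div] at hmono
  rw [← le_div_iff₀ hpos]
  exact hmono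

lemma cdf_lower {x : ℝ} (hx : x < 0) :
    stdPdf x * (-x) ≤ stdCdf x * (x ^ 2 + 1) := by
  have h1 := cdf_id1 hx
  have hxx : (0:ℝ) < x * x := mul_pos_of_neg_of_neg hx hx
  have h2 := R_le hx 2 (by nlinarith) (fun t ht => by nlinarith)
  set R1 := ∫ t in Set.Iic x, stdPdf t / t ^ 2
  have hx0 : x ≠ 0 := hx.ne
  field_simp at h1
  nlinarith [h1, h2]

lemma cdf_upper {x : ℝ} (hx : x < 0) :
    stdCdf x * (x ^ 4 - 3) ≤ stdPdf x * (-x) * (x ^ 2 - 1) := by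
  have h1 := cdf_id1 hx
  have h2 := cdf_id2 hx
  have hxx : (0:ℝ) < x * x := mul_pos_of_neg_of_neg hx hx
  have hx4 : (0:ℝ) < x ^ 4 := by nlinarith [mul_pos hxx hxx]
  have hb2 := R_le hx 4 hx4 (fun t ht => by
    have hsq : x ^ 2 ≤ t ^ 2 := by nlinarith
    have hprod : 0 ≤ (t ^ 2 - x ^ 2) * (t ^ 2 + x ^ 2) :=
      mul_nonneg (by linarith) (by positivity)
    nlinarith [hprod])
  set R1 := ∫ t in Set.Iic x, stdPdf t / t ^ 2
  set R2 := ∫ t in Set.Iic x, stdPdf t / t ^ 4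
  have hx0 : x ≠ 0 := hx.ne
  have e1 : (stdCdf x + R1) * x = -stdPdf x := by
    field_simp at h1; linarith [h1]
  have e2 : (R1 + 3 * R2) * x ^ 3 = -stdPdf x := by
    field_simp at h2; linarith [h2]
  -- stdCdf x * x^4 = -stdPdf x * x^3 - R1 * x^4  and  R1 * x^3 = -stdPdf x - 3 R2 x^3
  have e1' : stdCdf x * x ^ 4 + R1 * x ^ 4 = -stdPdf x * x ^ 3 := by
    linear_combination x ^ 3 * e1
  have e2' : R1 * x ^ 4 + 3 * R2 * x ^ 4 = -stdPdf x * x := by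
    linear_combination x * e2
  nlinarith [e1', e2', hb2]

lemma abs_bound {x : ℝ} (hx : x ≤ -2) :
    |1 - x * stdPdf x / stdCdf x - (stdPdf x) ^ 2 / (stdCdf x) ^ 2| ≤ 16 / x ^ 2 := by
  have hx0 : x < 0 := by linarith
  have hΦ := stdCdf_pos x
  have hφ := stdPdf_pos x
  set r : ℝ := stdPdf x / stdCdf x with hr_def
  have hr : 0 < r := div_pos hφ hΦ
  have h1 : r * (-x) ≤ x ^ 2 + 1 := by
    rw [hr_def, div_mul_eq_mul_div, div_le_iff₀ hΦ]
    linarith [cdf_lower hx0]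
  have h2 : x ^ 4 - 3 ≤ r * (-x) * (x ^ 2 - 1) := by
    rw [hr_def, div_mul_eq_mul_div, div_mul_eq_mul_div, le_div_iff₀ hΦ]
    linarith [cdf_upper hx0]
  have hE : 1 - x * stdPdf x / stdCdf x - (stdPdf x) ^ 2 / (stdCdf x) ^ 2
      = 1 + (-x) * r - r ^ 2 := by
    rw [mul_div_assoc, ← div_pow, ← hr_def]
    ring
  have hx2 : (0:ℝ) < x ^ 2 := by nlinarith
  have hup : (1 + (-x) * r - r ^ 2) * x ^ 2 ≤ 16 := by
    nlinarith [sq_nonneg (r*x + x^2), sq_nonneg (r*x + x^2 + 1),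
      mul_pos hr (by linarith : (0:ℝ) < -x), sq_nonneg x, sq_nonneg r]
  have hlo : -16 ≤ (1 + (-x) * r - r ^ 2) * x ^ 2 := by
    nlinarith [sq_nonneg (r*x + x^2), sq_nonneg (r*x + x^2 + 1),
      mul_pos hr (by linarith : (0:ℝ) < -x), sq_nonneg x, sq_nonneg r]
  rw [hE, abs_le]
  constructor
  · rw [show -(16 / x ^ 2) = (-16) / x ^ 2 by ring, div_le_iff₀ hx2]
    linarith
  · rw [le_div_iff₀ hx2]
    linarith

lemma part1 : Tendsto (fun x : ℝ => 1 - x * stdPdf x / stdCdf x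
    - (stdPdf x) ^ 2 / (stdCdf x) ^ 2) atBot (nhds 0) := by
  have hsq : Tendsto (fun x : ℝ => x ^ 2) atBot atTop := by
    have h1 : Tendsto (fun x : ℝ => (-x) ^ 2) atBot atTop :=
      (tendsto_pow_atTop (two_ne_zero)).comp tendsto_neg_atBot_atTop
    refine h1.congr fun x => by ring
  have hbound : Tendsto (fun x : ℝ => 16 / x ^ 2) atBot (nhds 0) := by
    have := hsq.inv_tendsto_atTop.const_mul (16:ℝ)
    simpa [div_eq_mul_inv] using this
  have hbneg := hbound.neg
  rw [neg_zero] at hbneg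
  apply tendsto_of_tendsto_of_tendsto_of_le_of_le' hbneg hbound
  · filter_upwards [eventually_le_atBot (-2 : ℝ)] with x hx
    have := abs_bound hx
    rw [abs_le] at this
    linarith [this.1]
  · filter_upwards [eventually_le_atBot (-2 : ℝ)] with x hx
    have := abs_bound hx
    rw [abs_le] at this
    linarith [this.2]

lemma integral_stdPdf_total : ∫ t, stdPdf t = 1 := by
  unfold stdPdf
  rw [integral_const_mul]
  have h : (fun t : ℝ => Real.exp (-t ^ 2 / 2)) = fun t : ℝ => Real.exp (-(1/2 : ℝ) * t ^ 2) := by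
    funext t; ring_nf
  rw [h, integral_gaussian]
  rw [show Real.pi / (1/2) = 2 * Real.pi by ring]
  rw [inv_mul_cancel₀ (by positivity : Real.sqrt (2 * Real.pi) ≠ 0)]

lemma stdCdf_zero : stdCdf 0 = 1 / 2 := by
  have hsym : (∫ t in Set.Iic (0:ℝ), stdPdf t) = ∫ t in Set.Ioi (0:ℝ), stdPdf t := by
    have h := integral_comp_neg_Iic (c := (0:ℝ)) (f := stdPdf)
    rw [neg_zero] at h
    rw [← h]
    congr 1
    funext t
    unfold stdPdf
    ring_nf
  have hsplit := intervalIntegral.integral_Iic_add_Ioi (b := (0:ℝ)) (f := stdPdf)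
    (integrable_stdPdf.restrict) (integrable_stdPdf.restrict)
  rw [integral_stdPdf_total, ← hsym] at hsplit
  unfold stdCdf
  linarith

lemma part2 : 1 - (0 : ℝ) * stdPdf 0 / stdCdf 0 - (stdPdf 0) ^ 2 / (stdCdf 0) ^ 2
    = 1 - 2 / Real.pi := by
  have h0 : stdPdf 0 = (Real.sqrt (2 * Real.pi))⁻¹ := by
    unfold stdPdf; norm_num
  rw [h0, stdCdf_zero]
  have hs : (Real.sqrt (2 * Real.pi)) ^ 2 = 2 * Real.pi := Real.sq_sqrt (by positivity)
  have hπ : (0:ℝ) < Real.pi := Real.pi_pos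
  rw [inv_pow, hs]
  field_simp
  ring

/-- The tail conditional variance `Var[X | X < x]` of a standard normal tends to `0` as
`x → -∞`, and equals `1 - 2/π` at `x = 0`. -/
theorem stmt_7 :
    Tendsto (fun x : ℝ => 1 - x * stdPdf x / stdCdf x - (stdPdf x) ^ 2 / (stdCdf x) ^ 2)
      atBot (nhds 0) ∧
    1 - (0 : ℝ) * stdPdf 0 / stdCdf 0 - (stdPdf 0) ^ 2 / (stdCdf 0) ^ 2 = 1 - 2 / Real.pi :=
  ⟨part1, part2⟩
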